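/- Let G be a simple graph on vertex set I, and let w ∈ M(I, G) be an element of the free partially commutative monoid whose initial alphabet (as a set) is {i}. Let m be the number of occurrences of i in w. Then there exist unique w_1, ..., w_m ∈ M(I, G) such that w = w_1 ⋯ w_m, and for each j, the initial alphabet multiset of w_j equals {i} and i occurs exactly once in w_j. -/

import Mathlib

set_option linter.unusedSectionVars false

/-- The commutation relation on the free monoid: two letters may be exchanged
whenever they are not adjacent in `G`. -/
def traceRel {V : Type*} (G : SimpleGraph V) : FreeMonoid V → FreeMonoid V → Prop :=
  fun x y => ∃ a b : V, ¬ G.Adj a b ∧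
    x = FreeMonoid.of a * FreeMonoid.of b ∧ y = FreeMonoid.of b * FreeMonoid.of a

/-- The congruence on the free monoid generated by the commutation relations. -/
def traceCon {V : Type*} (G : SimpleGraph V) : Con (FreeMonoid V) := conGen (traceRel G)

/-- The free partially commutative monoid (trace monoid) `M(I, G)` associated to `G`. -/
abbrev TraceMonoid {V : Type*} (G : SimpleGraph V) := (traceCon G).Quotient

/-- The element of the trace monoid represented by a list of letters. -/
def traceMk {V : Type*} (G : SimpleGraph V) (L : List V) : TraceMonoid G :=
  (traceCon G).mk' (FreeMonoid.ofList L)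

/-- The multiplicity of the letter `i` in the initial alphabet multiset `IA_m(w)`:
the largest `m` such that `w = u · iᵐ`. -/
noncomputable def IAcount {V : Type*} (G : SimpleGraph V) (w : TraceMonoid G) (i : V) : ℕ :=
  sSup {m : ℕ | ∃ u : TraceMonoid G, w = u * (traceMk G [i]) ^ m}

/-- The initial alphabet `IA(w)` of a trace: the set of letters `i` with `w = u · i`. -/
def IAset {V : Type*} (G : SimpleGraph V) (w : TraceMonoid G) : Set V :=
  {i | ∃ u : TraceMonoid G, w = u * traceMk G [i]}


section Dev
variable {V : Type*} [DecidableEq V] (G : SimpleGraph V)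

lemma traceMk_append (A B : List V) :
    traceMk G (A ++ B) = traceMk G A * traceMk G B := by
  show (traceCon G).mk' (FreeMonoid.ofList A * FreeMonoid.ofList B) = _
  rw [map_mul]; rfl

lemma traceMk_nil : traceMk G ([] : List V) = 1 := by
  show (traceCon G).mk' 1 = 1; rw [map_one]

variable {G}

lemma traceMk_swap {a b : V} (h : ¬ G.Adj a b) (A B : List V) :
    traceMk G (A ++ a :: b :: B) = traceMk G (A ++ b :: a :: B) := by
  have h1 : traceCon G (FreeMonoid.ofList [a,b]) (FreeMonoid.ofList [b,a]) :=
    ConGen.Rel.of _ _ ⟨a, b, h, rfl, rfl⟩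
  have h2 : traceCon G (FreeMonoid.ofList (A ++ a :: b :: B))
      (FreeMonoid.ofList (A ++ b :: a :: B)) := by
    have e1 : FreeMonoid.ofList (A ++ a :: b :: B)
        = FreeMonoid.ofList A * (FreeMonoid.ofList [a,b] * FreeMonoid.ofList B) := by
      show FreeMonoid.ofList (A ++ a :: b :: B) = FreeMonoid.ofList (A ++ ([a,b] ++ B))
      simp
    have e2 : FreeMonoid.ofList (A ++ b :: a :: B)
        = FreeMonoid.ofList A * (FreeMonoid.ofList [b,a] * FreeMonoid.ofList B) := by
      show FreeMonoid.ofList (A ++ b :: a :: B) = FreeMonoid.ofList (A ++ ([b,a] ++ B))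
      simp
    rw [e1, e2]
    exact (traceCon G).mul ((traceCon G).refl _) ((traceCon G).mul h1 ((traceCon G).refl _))
  exact (Con.eq _).mpr h2

/-- move a letter commuting with everything in `A` to the front -/
lemma traceMk_pull {c : V} {A : List V} (hA : ∀ x ∈ A, ¬ G.Adj c x) (B : List V) :
    traceMk G (A ++ c :: B) = traceMk G (c :: (A ++ B)) := by
  induction A with
  | nil => rfl
  | cons a A ih =>
    have h1 : ∀ x ∈ A, ¬ G.Adj c x := fun x hx => hA x (List.mem_cons_of_mem _ hx)
    have hac : ¬ G.Adj a c := fun h => hA a List.mem_cons_self h.symm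
    have : traceMk G (a :: (A ++ c :: B)) = traceMk G (a :: c :: (A ++ B)) := by
      have := congrArg (fun z => traceMk G [a] * z) (ih h1)
      simpa [← traceMk_append] using this
    calc traceMk G ((a :: A) ++ c :: B) = traceMk G (a :: c :: (A ++ B)) := this
      _ = traceMk G (c :: a :: (A ++ B)) := traceMk_swap hac [] _
end Dev

section Homs
variable {V : Type*} [DecidableEq V] {G : SimpleGraph V}

def countHom (c : V) : FreeMonoid V →* Multiplicative ℕ :=
  FreeMonoid.lift (fun v => Multiplicative.ofAdd (if v = c then 1 else 0))

lemma countHom_ofList (c : V) (L : List V) :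
    countHom c (FreeMonoid.ofList L) = Multiplicative.ofAdd (L.count c) := by
  induction L with
  | nil =>
    show countHom c 1 = _
    rw [map_one]; simp
  | cons a L ih =>
    have : FreeMonoid.ofList (a :: L) = FreeMonoid.of a * FreeMonoid.ofList L := rfl
    rw [this, map_mul, ih]
    show FreeMonoid.lift _ (FreeMonoid.of a) * _ = _
    rw [FreeMonoid.lift_eval_of]
    by_cases h : a = c <;> simp [h, List.count_cons, ← ofAdd_add, add_comm]

lemma count_eq_of_traceMk_eq {L L' : List V} (h : traceMk G L = traceMk G L') (c : V) :
    L.count c = L'.count c := by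
  have hle : traceCon G ≤ Con.ker (countHom c) := by
    apply Con.conGen_le.mpr
    rintro x y ⟨a, b, hab, rfl, rfl⟩
    show countHom c _ = countHom c _
    rw [map_mul, map_mul, mul_comm]
  have h2 := hle ((Con.eq _).mp h)
  have h3 : countHom c (FreeMonoid.ofList L) = countHom c (FreeMonoid.ofList L') := h2
  rw [countHom_ofList, countHom_ofList] at h3
  exact Multiplicative.ofAdd.injective h3

def projP (a b : V) : V → Prop := fun v => v = a ∨ v = b

noncomputable instance (a b : V) : DecidablePred (projP a b) := fun _ => instDecidableOr

open scoped Classical in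
noncomputable def projHom (a b : V) : FreeMonoid V →* FreeMonoid V :=
  FreeMonoid.lift (fun v => if projP a b v then FreeMonoid.of v else 1)

lemma projHom_ofList (a b : V) (L : List V) :
    projHom a b (FreeMonoid.ofList L) = FreeMonoid.ofList (L.filter (fun v => decide (projP a b v))) := by
  classical
  induction L with
  | nil => show projHom a b 1 = _; rw [map_one]; rfl
  | cons x L ih =>
    have : FreeMonoid.ofList (x :: L) = FreeMonoid.of x * FreeMonoid.ofList L := rfl
    rw [this, map_mul, ih]
    show (if projP a b x then FreeMonoid.of x else 1) * _ = _
    by_cases h : projP a b x <;> simp [h, List.filter_cons] <;> rfl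

lemma proj_eq_of_traceMk_eq {L L' : List V} (h : traceMk G L = traceMk G L') {a b : V}
    (hab : G.Adj a b) :
    L.filter (fun v => decide (projP a b v)) = L'.filter (fun v => decide (projP a b v)) := by
  classical
  have hle : traceCon G ≤ Con.ker (projHom a b) := by
    apply Con.conGen_le.mpr
    rintro x y ⟨c, d, hcd, rfl, rfl⟩
    show projHom a b _ = projHom a b _
    rw [map_mul, map_mul]
    show (if projP a b c then FreeMonoid.of c else 1) * (if projP a b d then FreeMonoid.of d else 1)
       = (if projP a b d then FreeMonoid.of d else 1) * (if projP a b c then FreeMonoid.of c else 1)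
    by_cases h1 : projP a b c <;> by_cases h2 : projP a b d <;> simp [h1, h2]
    rcases h1 with rfl | rfl <;> rcases h2 with rfl | rfl
    · rfl
    · exact absurd hab hcd
    · exact absurd hab.symm hcd
    · rfl
  have h2 := hle ((Con.eq _).mp h)
  have h3 : projHom a b (FreeMonoid.ofList L) = projHom a b (FreeMonoid.ofList L') := h2
  rw [projHom_ofList, projHom_ofList] at h3
  exact FreeMonoid.ofList.injective h3

end Homs
section Proj
variable {V : Type*} [DecidableEq V] {G : SimpleGraph V}

lemma exists_first {c : V} {L : List V} (h : c ∈ L) :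
    ∃ A B, L = A ++ c :: B ∧ c ∉ A := by
  induction L with
  | nil => cases h
  | cons a T ih =>
    by_cases hac : a = c
    · exact ⟨[], T, by rw [hac]; rfl, List.not_mem_nil⟩
    · have hcT : c ∈ T := by
        rcases List.mem_cons.mp h with h' | h'
        · exact absurd h'.symm hac
        · exact h'
      obtain ⟨A, B, rfl, hA⟩ := ih hcT
      exact ⟨a :: A, B, rfl, by
        intro hc; rcases List.mem_cons.mp hc with h' | h'
        · exact hac h'.symm
        · exact hA h'⟩

lemma exists_last {c : V} {L : List V} (h : c ∈ L) :
    ∃ A B, L = A ++ c :: B ∧ c ∉ B := by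
  induction L with
  | nil => cases h
  | cons a T ih =>
    by_cases hcT : c ∈ T
    · obtain ⟨A, B, rfl, hB⟩ := ih hcT
      exact ⟨a :: A, B, rfl, hB⟩
    · have : a = c := by
        rcases List.mem_cons.mp h with h' | h'
        · exact h'.symm
        · exact absurd h' hcT
      exact ⟨[], T, by rw [this]; rfl, hcT⟩

lemma projComplete : ∀ (L L' : List V),
    (∀ c, L.count c = L'.count c) →
    (∀ a b, G.Adj a b → L.filter (fun v => decide (projP a b v)) = L'.filter (fun v => decide (projP a b v))) →
    traceMk G L = traceMk G L' := by
  intro L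
  induction L with
  | nil =>
    intro L' hc _
    cases L' with
    | nil => rfl
    | cons x T =>
      exfalso
      have := hc x
      simp [List.count_cons] at this
  | cons c T ih =>
    intro L' hc hp
    have hcL' : c ∈ L' := by
      have := hc c
      simp [List.count_cons] at this
      exact List.count_pos_iff.mp (by omega)
    obtain ⟨A, B, rfl, hcA⟩ := exists_first hcL'
    -- every letter of A is non-adjacent to c
    have hA : ∀ d ∈ A, ¬ G.Adj c d := by
      intro d hd hadj
      have hdc : d ≠ c := fun h => hcA (h ▸ hd)
      have hfilter := hp d c hadj.symm
      have hPc : projP d c c := Or.inr rfl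
      have hPd : projP d c d := Or.inl rfl
      rw [List.filter_append] at hfilter
      cases hFA : A.filter (fun v => decide (projP d c v)) with
      | nil =>
        have : d ∈ A.filter (fun v => decide (projP d c v)) :=
          List.mem_filter.mpr ⟨hd, by simpa using hPd⟩
        rw [hFA] at this; cases this
      | cons a₀ rest =>
        rw [hFA] at hfilter
        have hlhs : (c :: T).filter (fun v => decide (projP d c v))
            = c :: T.filter (fun v => decide (projP d c v)) := by
          simp [List.filter_cons, hPc]
        rw [hlhs] at hfilter
        have : c = a₀ := (List.cons.injEq _ _ _ _).mp hfilter |>.1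
        have ha₀ : a₀ ∈ A := (List.mem_filter.mp (hFA ▸ (List.mem_cons_self (a := a₀) (l := rest)))).1
        exact hcA (this ▸ ha₀)
    -- move c to the front of L'
    have hmove : traceMk G (A ++ c :: B) = traceMk G (c :: (A ++ B)) := traceMk_pull hA B
    -- counts for recursion
    have hc' : ∀ x, T.count x = (A ++ B).count x := by
      intro x
      have := hc x
      by_cases hxc : x = c <;>
        simp [List.count_cons, List.count_append, hxc] at this ⊢ <;> omega
    -- projections for recursion
    have hp' : ∀ a b, G.Adj a b →
        T.filter (fun v => decide (projP a b v)) = (A ++ B).filter (fun v => decide (projP a b v)) := by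
      intro a b hab
      have h0 := hp a b hab
      rw [List.filter_append] at h0 ⊢
      by_cases hcab : projP a b c
      · -- filter of A is empty
        have hAnil : A.filter (fun v => decide (projP a b v)) = [] := by
          rw [List.filter_eq_nil_iff]
          intro x hx
          simp only [decide_eq_true_eq]
          rintro (rfl | rfl) <;> rcases hcab with rfl | rfl
          · exact hcA hx
          · exact hA x hx hab.symm
          · exact hA x hx hab
          · exact hcA hx
        rw [hAnil] at h0 ⊢
        have hlhs : (c :: T).filter (fun v => decide (projP a b v))
            = c :: T.filter (fun v => decide (projP a b v)) := by simp [List.filter_cons, hcab]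
        have hrhs : (c :: B).filter (fun v => decide (projP a b v))
            = c :: B.filter (fun v => decide (projP a b v)) := by simp [List.filter_cons, hcab]
        rw [hlhs, hrhs] at h0
        simpa using (List.cons.injEq _ _ _ _).mp h0 |>.2
      · have hlhs : (c :: T).filter (fun v => decide (projP a b v))
            = T.filter (fun v => decide (projP a b v)) := by simp [List.filter_cons, hcab]
        have hrhs : (c :: B).filter (fun v => decide (projP a b v))
            = B.filter (fun v => decide (projP a b v)) := by simp [List.filter_cons, hcab]
        rw [hlhs] at h0; rw [hrhs] at h0; exact h0
    have hrec := ih (A ++ B) hc' hp'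
    have : traceMk G (c :: T) = traceMk G (c :: (A ++ B)) := by
      have := congrArg (fun z => traceMk G [c] * z) hrec
      simpa [← traceMk_append] using this
    rw [this, ← hmove]

end Proj

section Conseq
variable {V : Type*} [DecidableEq V] {G : SimpleGraph V}

lemma exists_rep (w : TraceMonoid G) : ∃ L : List V, w = traceMk G L := by
  obtain ⟨x, rfl⟩ := Con.mk'_surjective w
  exact ⟨FreeMonoid.toList x, by simp [traceMk]⟩

lemma cancel_left {x y z : TraceMonoid G} (h : x * y = x * z) : y = z := by
  obtain ⟨X, rfl⟩ := exists_rep x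
  obtain ⟨Y, rfl⟩ := exists_rep y
  obtain ⟨Z, rfl⟩ := exists_rep z
  rw [← traceMk_append, ← traceMk_append] at h
  apply projComplete
  · intro c
    have := count_eq_of_traceMk_eq h c
    simp [List.count_append] at this; omega
  · intro a b hab
    have := proj_eq_of_traceMk_eq h hab
    rw [List.filter_append, List.filter_append] at this
    exact List.append_cancel_left this

lemma cancel_right {x y z : TraceMonoid G} (h : y * x = z * x) : y = z := by
  obtain ⟨X, rfl⟩ := exists_rep x
  obtain ⟨Y, rfl⟩ := exists_rep y
  obtain ⟨Z, rfl⟩ := exists_rep z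
  rw [← traceMk_append, ← traceMk_append] at h
  apply projComplete
  · intro c
    have := count_eq_of_traceMk_eq h c
    simp [List.count_append] at this; omega
  · intro a b hab
    have := proj_eq_of_traceMk_eq h hab
    rw [List.filter_append, List.filter_append] at this
    exact List.append_cancel_right this

/-- splitting off a letter that commutes with everything after it -/
lemma traceMk_split {c : V} {A B : List V} (hB : ∀ b ∈ B, ¬ G.Adj c b) :
    traceMk G (A ++ c :: B) = traceMk G (A ++ B) * traceMk G [c] := by
  have h1 : traceMk G (B ++ [c]) = traceMk G (c :: (B ++ [])) := traceMk_pull hB []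
  have h2 : traceMk G (c :: B) = traceMk G B * traceMk G [c] := by
    rw [← traceMk_append]
    simpa using h1.symm
  calc traceMk G (A ++ c :: B) = traceMk G A * traceMk G (c :: B) := traceMk_append G A _
    _ = traceMk G A * (traceMk G B * traceMk G [c]) := by rw [h2]
    _ = traceMk G (A ++ B) * traceMk G [c] := by rw [traceMk_append, mul_assoc]

/-- characterization of membership in the initial alphabet (forward direction) -/
lemma IA_mem_char {L : List V} {v : V} (h : v ∈ IAset G (traceMk G L)) :
    ∃ A B, L = A ++ v :: B ∧ ∀ b ∈ B, ¬ G.Adj v b ∧ b ≠ v := by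
  obtain ⟨u, hu⟩ := h
  obtain ⟨M, rfl⟩ := exists_rep u
  rw [← traceMk_append] at hu
  have hvL : v ∈ L := by
    have := count_eq_of_traceMk_eq hu v
    simp [List.count_append] at this
    exact List.count_pos_iff.mp (by omega)
  obtain ⟨A, B, rfl, hvB⟩ := exists_last hvL
  refine ⟨A, B, rfl, fun b hb => ⟨?_, fun hbv => hvB (hbv ▸ hb)⟩⟩
  intro hadj
  have hbv : b ≠ v := fun hbv => hvB (hbv ▸ hb)
  have hfilter := proj_eq_of_traceMk_eq hu hadj
  set P : V → Bool := fun x => decide (projP v b x) with hP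
  have hPv : P v = true := by simp [hP, projP]
  have hPb : P b = true := by simp [hP, projP]
  rw [List.filter_append, List.filter_append] at hfilter
  have hfv : List.filter P [v] = [v] := by simp [List.filter_cons, hPv]
  have hlhs : List.filter P (v :: B) = v :: List.filter P B := by
    simp [List.filter_cons, hPv]
  rw [hfv, hlhs] at hfilter
  -- compare reversed lists
  have hrev := congrArg List.reverse hfilter
  simp only [List.reverse_append, List.reverse_cons] at hrev
  cases hrevB : (List.filter P B).reverse with
  | nil =>
    have : b ∈ List.filter P B := List.mem_filter.mpr ⟨hb, hPb⟩
    rw [← List.mem_reverse, hrevB] at this; cases this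
  | cons y ys =>
    rw [hrevB] at hrev
    simp only [List.cons_append, List.append_assoc] at hrev
    have hyv : y = v := ((List.cons.injEq _ _ _ _).mp hrev).1
    have hy : y ∈ List.filter P B := by
      rw [← List.mem_reverse, hrevB]; exact List.mem_cons_self
    have : y ∈ B := (List.mem_filter.mp hy).1
    exact hvB (hyv ▸ this)

lemma IA_mem_of {A B : List V} {v : V} (hB : ∀ b ∈ B, ¬ G.Adj v b) :
    v ∈ IAset G (traceMk G (A ++ v :: B)) :=
  ⟨traceMk G (A ++ B), traceMk_split hB⟩

lemma traceMk_pow (i : V) (m : ℕ) :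
    (traceMk G [i]) ^ m = traceMk G (List.replicate m i) := by
  induction m with
  | zero => simpa using (traceMk_nil G).symm
  | succ k ih =>
    rw [pow_succ, ih, ← traceMk_append]
    congr 1
    rw [← List.replicate_succ']

lemma mem_IAset_count_le {L : List V} {i : V} {m : ℕ}
    (h : ∃ u : TraceMonoid G, traceMk G L = u * (traceMk G [i]) ^ m) : m ≤ L.count i := by
  obtain ⟨u, hu⟩ := h
  obtain ⟨M, rfl⟩ := exists_rep u
  rw [traceMk_pow, ← traceMk_append] at hu
  have := count_eq_of_traceMk_eq hu i
  simp [List.count_append] at this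
  omega

lemma IAcount_le_count (L : List V) (i : V) : IAcount G (traceMk G L) i ≤ L.count i := by
  apply csSup_le
  · exact ⟨0, ⟨traceMk G L, by simp⟩⟩
  · exact fun m hm => mem_IAset_count_le hm

lemma IAcount_pos {w : TraceMonoid G} {i : V} (h : i ∈ IAset G w) : 1 ≤ IAcount G w i := by
  obtain ⟨L, rfl⟩ := exists_rep w
  apply le_csSup
  · exact ⟨L.count i, fun m hm => mem_IAset_count_le hm⟩
  · obtain ⟨u, hu⟩ := h
    exact ⟨u, by simpa using hu⟩

lemma IAcount_eq_zero {w : TraceMonoid G} {v : V} (h : v ∉ IAset G w) : IAcount G w v = 0 := by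
  have hS : {m : ℕ | ∃ u : TraceMonoid G, w = u * (traceMk G [v]) ^ m} = {0} := by
    ext m
    simp only [Set.mem_setOf_eq, Set.mem_singleton_iff]
    constructor
    · rintro ⟨u, hu⟩
      by_contra hm
      obtain ⟨k, rfl⟩ := Nat.exists_eq_succ_of_ne_zero hm
      exact h ⟨u * (traceMk G [v]) ^ k, by rw [hu, pow_succ, mul_assoc]⟩
    · rintro rfl; exact ⟨w, by simp⟩
  rw [IAcount, hS, csSup_singleton]

lemma IAcount_eq_one {L : List V} {i : V} (h : i ∈ IAset G (traceMk G L))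
    (hc : L.count i = 1) : IAcount G (traceMk G L) i = 1 :=
  le_antisymm (hc ▸ IAcount_le_count L i) (IAcount_pos h)

/-- letters that occur in a trace -/
def occursIn {V : Type*} {G : SimpleGraph V} (a : V) (x : TraceMonoid G) : Prop :=
  ∃ L, x = traceMk G L ∧ a ∈ L

lemma occursIn_rep {a : V} {x : TraceMonoid G} (h : occursIn a x) {L : List V}
    (hL : x = traceMk G L) : a ∈ L := by
  obtain ⟨M, hM, haM⟩ := h
  have := count_eq_of_traceMk_eq (hM.symm.trans hL) a
  exact List.count_pos_iff.mp (this ▸ List.count_pos_iff.mpr haM)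

lemma comm_of_indep {c : V} {y : TraceMonoid G} (h : ∀ b, occursIn b y → ¬ G.Adj c b) :
    traceMk G [c] * y = y * traceMk G [c] := by
  obtain ⟨Y, rfl⟩ := exists_rep y
  have hY : ∀ b ∈ Y, ¬ G.Adj c b := fun b hb => h b ⟨Y, rfl, hb⟩
  rw [← traceMk_append, ← traceMk_append]
  show traceMk G (c :: Y) = _
  have := traceMk_pull hY ([] : List V)
  simpa using this.symm

end Conseq

section Levi
variable {V : Type*} [DecidableEq V] {G : SimpleGraph V}

lemma peel {u v w : TraceMonoid G} {c : V} (h : u * v = w * traceMk G [c]) :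
    (∃ v', v = v' * traceMk G [c] ∧ w = u * v') ∨
    (∃ u', u = u' * traceMk G [c] ∧ w = u' * v ∧ ∀ b, occursIn b v → ¬ G.Adj c b) := by
  obtain ⟨U, rfl⟩ := exists_rep u
  obtain ⟨Vl, rfl⟩ := exists_rep v
  obtain ⟨W, rfl⟩ := exists_rep w
  have hmem : c ∈ IAset G (traceMk G (U ++ Vl)) := by
    refine ⟨traceMk G W, ?_⟩
    rw [traceMk_append]; exact h
  obtain ⟨A, B, hsplit, hB⟩ := IA_mem_char hmem
  have hin : (∃ t, Vl = t ++ c :: B ∧ A = U ++ t) ∨ (∃ t', U = A ++ c :: t' ∧ B = t' ++ Vl) := by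
    rcases List.append_eq_append_iff.mp hsplit with ⟨t, ht1, ht2⟩ | ⟨t, ht1, ht2⟩
    · exact Or.inl ⟨t, ht2, ht1⟩
    · cases t with
      | nil =>
        left
        refine ⟨[], by simpa using ht2.symm, by simpa using ht1.symm⟩
      | cons d t' =>
        right
        have hd : d = c ∧ B = t' ++ Vl := by
          constructor
          · exact (((List.cons.injEq _ _ _ _).mp ht2).1).symm
          · exact ((List.cons.injEq _ _ _ _).mp ht2).2
        exact ⟨t', by rw [ht1, hd.1], hd.2⟩
  rcases hin with ⟨t, hVl, _⟩ | ⟨t', hU, hBeq⟩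
  · left
    have hv' : traceMk G Vl = traceMk G (t ++ B) * traceMk G [c] := by
      rw [hVl]
      exact traceMk_split (fun b hb => (hB b hb).1)
    refine ⟨traceMk G (t ++ B), hv', ?_⟩
    apply cancel_right (x := traceMk G [c])
    rw [← h, hv', mul_assoc]
  · right
    have ht'B : ∀ b ∈ t', ¬ G.Adj c b := fun b hb =>
      (hB b (hBeq ▸ List.mem_append_left _ hb)).1
    have hVlc : ∀ b ∈ Vl, ¬ G.Adj c b := fun b hb =>
      (hB b (hBeq ▸ List.mem_append_right _ hb)).1
    have hu' : traceMk G U = traceMk G (A ++ t') * traceMk G [c] := by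
      rw [hU]; exact traceMk_split ht'B
    have hcomm : ∀ b, occursIn b (traceMk G Vl) → ¬ G.Adj c b :=
      fun b hb => hVlc b (occursIn_rep hb rfl)
    refine ⟨traceMk G (A ++ t'), hu', ?_, hcomm⟩
    apply cancel_right (x := traceMk G [c])
    rw [← h, hu']
    rw [mul_assoc, mul_assoc, comm_of_indep hcomm]

lemma levi : ∀ (Y : List V) (x u v' : TraceMonoid G),
    x * traceMk G Y = u * v' →
    ∃ p q r s : TraceMonoid G, x = p * q ∧ traceMk G Y = r * s ∧ u = p * r ∧ v' = q * s ∧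
      ∀ a b, occursIn a q → occursIn b r → ¬ G.Adj a b := by
  intro Y
  induction Y using List.reverseRecOn with
  | nil =>
    intro x u v' h
    refine ⟨u, v', 1, 1, ?_, by simp [traceMk_nil], by simp, by simp, ?_⟩
    · simpa [traceMk_nil] using h
    · intro a b _ hb
      exact absurd (occursIn_rep hb (show (1 : TraceMonoid G) = traceMk G [] by rw [traceMk_nil]))
        List.not_mem_nil
  | append_singleton Y c ih =>
    intro x u v' h
    have h' : u * v' = (x * traceMk G Y) * traceMk G [c] := by
      rw [← h, traceMk_append G Y [c], mul_assoc]
    rcases peel h' with ⟨v2, hv2, hw⟩ | ⟨u2, hu2, hw, hcomm⟩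
    · obtain ⟨p, q, r, s, hx, hY, hu, hv2e, hind⟩ := ih x u v2 hw
      refine ⟨p, q, r, s * traceMk G [c], hx, ?_, hu, ?_, hind⟩
      · rw [traceMk_append, hY, mul_assoc]
      · rw [hv2, hv2e, mul_assoc]
    · obtain ⟨p, q, r, s, hx, hY, hu', hv'e, hind⟩ := ih x u2 v' hw
      have hsv' : ∀ b, occursIn b s → occursIn b v' := by
        intro b hb
        obtain ⟨Q, hQ⟩ := exists_rep q
        obtain ⟨S, hS⟩ := exists_rep s
        exact ⟨Q ++ S, by rw [hv'e, hQ, hS, traceMk_append],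
          List.mem_append_right _ (occursIn_rep hb hS)⟩
      have hscomm : traceMk G [c] * s = s * traceMk G [c] :=
        comm_of_indep (fun b hb => hcomm b (hsv' b hb))
      refine ⟨p, q, r * traceMk G [c], s, hx, ?_, ?_, hv'e, ?_⟩
      · rw [traceMk_append, hY, mul_assoc, mul_assoc, ← hscomm, ← mul_assoc]
      · rw [hu2, hu', mul_assoc]
      · intro a b ha hb
        obtain ⟨R, hR⟩ := exists_rep r
        have hb' : b ∈ R ++ [c] := occursIn_rep hb (by rw [hR, traceMk_append])
        rcases List.mem_append.mp hb' with hbR | hbc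
        · exact hind a b ha ⟨R, hR, hbR⟩
        · have hbc' : b = c := by simpa using hbc
          subst hbc'
          intro hadj
          have hav' : occursIn a v' := by
            obtain ⟨Q, hQ⟩ := exists_rep q
            obtain ⟨S, hS⟩ := exists_rep s
            exact ⟨Q ++ S, by rw [hv'e, hQ, hS, traceMk_append],
              List.mem_append_left _ (occursIn_rep ha hQ)⟩
          exact hcomm a hav' hadj.symm

end Levi

section Uniq
variable {V : Type*} [DecidableEq V] {G : SimpleGraph V}

lemma IA_of_concat {A : List V} {b : V} {w p : TraceMonoid G}
    (hw : w = p * traceMk G (A ++ [b])) : b ∈ IAset G w :=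
  ⟨p * traceMk G A, by rw [hw, traceMk_append, mul_assoc]⟩

lemma IA_letter_eq {i : V} {w : TraceMonoid G} (hcond : ∀ v, v ≠ i → IAcount G w v = 0)
    {b : V} (hb : b ∈ IAset G w) : b = i := by
  by_contra hbi
  have h1 := IAcount_pos hb
  rw [hcond b hbi] at h1
  omega

lemma firstFactor {i : V} {X X' : List V} {R R' : TraceMonoid G}
    (hX1 : ∀ v, v ≠ i → IAcount G (traceMk G X) v = 0) (hX2 : X.count i = 1)
    (hX'1 : ∀ v, v ≠ i → IAcount G (traceMk G X') v = 0) (hX'2 : X'.count i = 1)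
    (h : traceMk G X * R = traceMk G X' * R') :
    traceMk G X = traceMk G X' := by
  obtain ⟨Y, rfl⟩ := exists_rep R
  obtain ⟨p, q, r, s, hx, hYe, hu, hv, hind⟩ := levi Y (traceMk G X) (traceMk G X') R' h
  obtain ⟨P, rfl⟩ := exists_rep p
  obtain ⟨Q, rfl⟩ := exists_rep q
  obtain ⟨Rl, rfl⟩ := exists_rep r
  have hcX : X.count i = P.count i + Q.count i := by
    have e : traceMk G X = traceMk G (P ++ Q) := by rw [hx, traceMk_append]
    have := count_eq_of_traceMk_eq e i
    simpa [List.count_append] using this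
  have hcX' : X'.count i = P.count i + Rl.count i := by
    have e : traceMk G X' = traceMk G (P ++ Rl) := by rw [hu, traceMk_append]
    have := count_eq_of_traceMk_eq e i
    simpa [List.count_append] using this
  rcases List.eq_nil_or_concat Q with hQnil | ⟨Q', b, hQc⟩
  · subst hQnil
    have hxp : traceMk G X = traceMk G P := by
      rw [hx, traceMk_nil, mul_one]
    rcases List.eq_nil_or_concat Rl with hRnil | ⟨Rl', b, hRc⟩
    · subst hRnil
      rw [hxp, hu, traceMk_nil, mul_one]
    · exfalso
      rw [List.concat_eq_append] at hRc; subst hRc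
      have hb : b ∈ IAset G (traceMk G X') := IA_of_concat hu
      have hbi : i = b := (IA_letter_eq hX'1 hb).symm
      subst hbi
      have : i ∈ Rl' ++ [i] := List.mem_append_right _ (List.mem_singleton_self i)
      have hcount : 1 ≤ (Rl' ++ [i]).count i := List.count_pos_iff.mpr this
      simp at hcX
      omega
  · rw [List.concat_eq_append] at hQc; subst hQc
    have hb : b ∈ IAset G (traceMk G X) := IA_of_concat hx
    have hbi : i = b := (IA_letter_eq hX1 hb).symm
    subst hbi
    have hiQ : (Q' ++ [i]).count i = Q'.count i + 1 := by simp
    have hcP : P.count i = 0 := by omega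
    have hcQ' : Q'.count i = 0 := by omega
    have hcRl : Rl.count i = 1 := by omega
    have hiRl : i ∈ Rl := List.count_pos_iff.mp (by omega)
    rcases List.eq_nil_or_concat Rl with hRnil | ⟨Rl'', b', hRc⟩
    · subst hRnil; cases hiRl
    · rw [List.concat_eq_append] at hRc; subst hRc
      have hb' : b' ∈ IAset G (traceMk G X') := IA_of_concat hu
      have hb'i : i = b' := (IA_letter_eq hX'1 hb').symm
      subst hb'i
      have hcRl'' : Rl''.count i = 0 := by simp at hcRl; omega
      have hiQmem : i ∈ Q' ++ [i] := List.mem_append_right _ (List.mem_singleton_self i)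
      have hoccq : occursIn i (traceMk G (Q' ++ [i])) := ⟨Q' ++ [i], rfl, hiQmem⟩
      have hoccr : occursIn i (traceMk G (Rl'' ++ [i])) :=
        ⟨Rl'' ++ [i], rfl, List.mem_append_right _ (List.mem_singleton_self i)⟩
      -- Rl'' must be empty
      have hRl''comm : ∀ x ∈ Rl'', ¬ G.Adj i x := by
        intro x hx'
        exact hind i x hoccq ⟨Rl'' ++ [i], rfl, List.mem_append_left _ hx'⟩
      have hRmove : traceMk G (Rl'' ++ [i]) = traceMk G (i :: Rl'') := by
        have := traceMk_pull (c := i) (A := Rl'') hRl''comm []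
        simpa using this
      have hRl''nil : Rl'' = [] := by
        rcases List.eq_nil_or_concat Rl'' with h' | ⟨W, y, hW⟩
        · exact h'
        · exfalso
          rw [List.concat_eq_append] at hW; subst hW
          have hX'y : traceMk G X' = (traceMk G P * traceMk G [i]) * traceMk G (W ++ [y]) := by
            rw [hu, hRmove]
            have : traceMk G (i :: (W ++ [y])) = traceMk G [i] * traceMk G (W ++ [y]) := by
              rw [← traceMk_append]; rfl
            rw [this, mul_assoc]
          have hy : y ∈ IAset G (traceMk G X') := IA_of_concat (p := traceMk G P * traceMk G [i])
            (by rw [hX'y])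
          have hyi : i = y := (IA_letter_eq hX'1 hy).symm
          subst hyi
          have : 1 ≤ (W ++ [i]).count i := List.count_pos_iff.mpr
            (List.mem_append_right _ (List.mem_singleton_self i))
          omega
      -- Q' must be empty
      have hQ'comm : ∀ x ∈ Q', ¬ G.Adj i x := by
        intro x hx'
        have := hind x i ⟨Q' ++ [i], rfl, List.mem_append_left _ hx'⟩ hoccr
        exact fun hadj => this hadj.symm
      have hQmove : traceMk G (Q' ++ [i]) = traceMk G (i :: Q') := by
        have := traceMk_pull (c := i) (A := Q') hQ'comm []
        simpa using this
      have hQ'nil : Q' = [] := by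
        rcases List.eq_nil_or_concat Q' with h' | ⟨W, y, hW⟩
        · exact h'
        · exfalso
          rw [List.concat_eq_append] at hW; subst hW
          have hXy : traceMk G X = (traceMk G P * traceMk G [i]) * traceMk G (W ++ [y]) := by
            rw [hx, hQmove]
            have : traceMk G (i :: (W ++ [y])) = traceMk G [i] * traceMk G (W ++ [y]) := by
              rw [← traceMk_append]; rfl
            rw [this, mul_assoc]
          have hy : y ∈ IAset G (traceMk G X) := IA_of_concat (p := traceMk G P * traceMk G [i])
            (by rw [hXy])
          have hyi : i = y := (IA_letter_eq hX1 hy).symm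
          subst hyi
          have : 1 ≤ (W ++ [i]).count i := List.count_pos_iff.mpr
            (List.mem_append_right _ (List.mem_singleton_self i))
          omega
      subst hRl''nil; subst hQ'nil
      rw [hx, hu]

lemma uniq {i : V} : ∀ (m : ℕ) (F F' : Fin m → List V),
    (List.ofFn fun j => traceMk G (F j)).prod = (List.ofFn fun j => traceMk G (F' j)).prod →
    (∀ j, (∀ v, v ≠ i → IAcount G (traceMk G (F j)) v = 0) ∧ (F j).count i = 1) →
    (∀ j, (∀ v, v ≠ i → IAcount G (traceMk G (F' j)) v = 0) ∧ (F' j).count i = 1) →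
    ∀ j, traceMk G (F j) = traceMk G (F' j) := by
  intro m
  induction m with
  | zero => intro F F' _ _ _ j; exact j.elim0
  | succ n ih =>
    intro F F' hprod hF hF' j
    rw [List.ofFn_succ, List.ofFn_succ, List.prod_cons, List.prod_cons] at hprod
    have h0 : traceMk G (F 0) = traceMk G (F' 0) :=
      firstFactor (hF 0).1 (hF 0).2 (hF' 0).1 (hF' 0).2 hprod
    rw [← h0] at hprod
    have hrest := cancel_left hprod
    have hih := ih (fun k => F k.succ) (fun k => F' k.succ) hrest
      (fun k => hF k.succ) (fun k => hF' k.succ)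
    refine Fin.cases ?_ ?_ j
    · exact h0
    · intro k; exact hih k

end Uniq

section Exist
variable {V : Type*} [DecidableEq V]

open scoped Classical in
noncomputable def splitKD (G : SimpleGraph V) (i : V) : List V → List V × List V
  | [] => ([], [])
  | a :: t =>
    if G.Adj a i ∨ ∃ k ∈ (splitKD G i t).1, G.Adj a k then
      (a :: (splitKD G i t).1, (splitKD G i t).2)
    else ((splitKD G i t).1, a :: (splitKD G i t).2)

variable {G : SimpleGraph V}

lemma splitKD_cons_pos {i a : V} {t : List V}
    (h : G.Adj a i ∨ ∃ k ∈ (splitKD G i t).1, G.Adj a k) :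
    splitKD G i (a :: t) = (a :: (splitKD G i t).1, (splitKD G i t).2) := by
  rw [splitKD, if_pos h]

lemma splitKD_cons_neg {i a : V} {t : List V}
    (h : ¬ (G.Adj a i ∨ ∃ k ∈ (splitKD G i t).1, G.Adj a k)) :
    splitKD G i (a :: t) = ((splitKD G i t).1, a :: (splitKD G i t).2) := by
  rw [splitKD, if_neg h]

lemma splitKD_mem {i : V} : ∀ (B : List V) (x : V),
    (x ∈ (splitKD G i B).1 → x ∈ B) ∧ (x ∈ (splitKD G i B).2 → x ∈ B) := by
  intro B
  induction B with
  | nil => intro x; constructor <;> (intro h; simp [splitKD] at h)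
  | cons a t ih =>
    intro x
    by_cases hif : G.Adj a i ∨ ∃ k ∈ (splitKD G i t).1, G.Adj a k
    · rw [splitKD_cons_pos hif]
      constructor
      · intro h
        rcases List.mem_cons.mp h with rfl | h'
        · exact List.mem_cons_self
        · exact List.mem_cons_of_mem _ ((ih x).1 h')
      · intro h; exact List.mem_cons_of_mem _ ((ih x).2 h)
    · rw [splitKD_cons_neg hif]
      constructor
      · intro h; exact List.mem_cons_of_mem _ ((ih x).1 h)
      · intro h
        rcases List.mem_cons.mp h with rfl | h'
        · exact List.mem_cons_self
        · exact List.mem_cons_of_mem _ ((ih x).2 h')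

def KeptOK (G : SimpleGraph V) (i : V) (K : List V) : Prop :=
  ∀ A v B', K = A ++ v :: B' → G.Adj v i ∨ ∃ k ∈ B', G.Adj v k

lemma splitKD_kept {i : V} : ∀ (B : List V), KeptOK G i (splitKD G i B).1 := by
  intro B
  induction B with
  | nil =>
    intro A v B' h
    simp [splitKD] at h
  | cons a t ih =>
    by_cases hif : G.Adj a i ∨ ∃ k ∈ (splitKD G i t).1, G.Adj a k
    · rw [splitKD_cons_pos hif]
      intro A v B' h
      cases A with
      | nil =>
        simp only [List.nil_append] at h
        have h1 := (List.cons.injEq _ _ _ _).mp h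
        obtain ⟨rfl, h2⟩ := h1
        rw [← h2]
        exact hif
      | cons x A' =>
        have h1 := (List.cons.injEq _ _ _ _).mp h
        exact ih A' v B' h1.2
    · rw [splitKD_cons_neg hif]
      exact ih

lemma splitKD_spec {i : V} : ∀ (B T : List V),
    traceMk G (B ++ i :: T) =
      traceMk G (((splitKD G i B).1 ++ [i]) ++ ((splitKD G i B).2 ++ T)) := by
  intro B
  induction B with
  | nil => intro T; simp [splitKD]
  | cons a t ih =>
    intro T
    by_cases hif : G.Adj a i ∨ ∃ k ∈ (splitKD G i t).1, G.Adj a k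
    · rw [splitKD_cons_pos hif]
      show traceMk G (a :: (t ++ i :: T)) = traceMk G (a :: (((splitKD G i t).1 ++ [i]) ++ ((splitKD G i t).2 ++ T)))
      have e1 : traceMk G (a :: (t ++ i :: T)) = traceMk G [a] * traceMk G (t ++ i :: T) :=
        traceMk_append G [a] _
      have e2 : traceMk G (a :: (((splitKD G i t).1 ++ [i]) ++ ((splitKD G i t).2 ++ T)))
          = traceMk G [a] * traceMk G (((splitKD G i t).1 ++ [i]) ++ ((splitKD G i t).2 ++ T)) :=
        traceMk_append G [a] _
      rw [e1, e2, ih T]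
    · rw [splitKD_cons_neg hif]
      push_neg at hif
      have hcomm : ∀ x ∈ (splitKD G i t).1 ++ [i], ¬ G.Adj a x := by
        intro x hx
        rcases List.mem_append.mp hx with h' | h'
        · exact hif.2 x h'
        · have : x = i := by simpa using h'
          subst this; exact hif.1
      show traceMk G (a :: (t ++ i :: T)) = traceMk G (((splitKD G i t).1 ++ [i]) ++ (a :: ((splitKD G i t).2 ++ T)))
      have e1 : traceMk G (a :: (t ++ i :: T)) = traceMk G [a] * traceMk G (t ++ i :: T) :=
        traceMk_append G [a] _
      rw [e1, ih T]
      have hpull := traceMk_pull (c := a) hcomm ((splitKD G i t).2 ++ T)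
      rw [hpull]
      exact (traceMk_append G [a] _).symm

lemma factor_IA {i : V} {K : List V} (hk : KeptOK G i K) (hiK : i ∉ K)
    {v : V} (hvi : v ≠ i) : IAcount G (traceMk G (K ++ [i])) v = 0 := by
  apply IAcount_eq_zero
  intro hv
  obtain ⟨A, B, hsplit, hB⟩ := IA_mem_char hv
  rcases List.eq_nil_or_concat B with rfl | ⟨B'', b, hBc⟩
  · have hinj := List.append_inj' hsplit rfl
    have : i = v := by
      have := hinj.2; injection this
    exact hvi this.symm
  · rw [List.concat_eq_append] at hBc; subst hBc
    have h2 : K ++ [i] = (A ++ v :: B'') ++ [b] := by rw [hsplit]; simp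
    have hinj := List.append_inj' h2 rfl
    have hbi : i = b := by injection hinj.2
    subst hbi
    have hK : K = A ++ v :: B'' := hinj.1
    have hAdjvi : ¬ G.Adj v i :=
      (hB i (List.mem_append_right _ (List.mem_singleton_self i))).1
    rcases hk A v B'' hK with h | ⟨k, hkmem, hkadj⟩
    · exact hAdjvi h
    · exact (hB k (List.mem_append_left _ hkmem)).1 hkadj

lemma existence {i : V} : ∀ (m : ℕ) (L : List V), L.count i = m → 1 ≤ m →
    IAset G (traceMk G L) ⊆ {i} →
    ∃ Fs : List (List V), Fs.length = m ∧
      traceMk G L = (Fs.map (traceMk G)).prod ∧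
      ∀ F ∈ Fs, IAcount G (traceMk G F) i = 1 ∧
        (∀ v, v ≠ i → IAcount G (traceMk G F) v = 0) ∧ F.count i = 1 := by
  intro m
  induction m with
  | zero => intro L _ h _; omega
  | succ n ih =>
    intro L hcount _ hIA
    have hiL : i ∈ L := List.count_pos_iff.mp (by omega)
    obtain ⟨B₁, Rest, rfl, hiB₁⟩ := exists_first hiL
    set K := (splitKD G i B₁).1 with hKdef
    set D := (splitKD G i B₁).2 with hDdef
    have hspec : traceMk G (B₁ ++ i :: Rest) = traceMk G ((K ++ [i]) ++ (D ++ Rest)) :=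
      splitKD_spec B₁ Rest
    have hiK : i ∉ K := fun h => hiB₁ ((splitKD_mem B₁ i).1 h)
    have hiD : i ∉ D := fun h => hiB₁ ((splitKD_mem B₁ i).2 h)
    have hkept : KeptOK G i K := splitKD_kept B₁
    have hcB₁ : B₁.count i = 0 := List.count_eq_zero.mpr hiB₁
    have hcRest : Rest.count i = n := by
      simp [List.count_append, List.count_cons, hcB₁] at hcount ⊢
      omega
    have hcK : K.count i = 0 := List.count_eq_zero.mpr hiK
    have hcD : D.count i = 0 := List.count_eq_zero.mpr hiD
    -- head factor conditions
    have hhead1 : (K ++ [i]).count i = 1 := by simp [List.count_append, hcK]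
    have hheadIA : i ∈ IAset G (traceMk G (K ++ [i])) :=
      IA_of_concat (p := 1) (one_mul _).symm
    have hheadIAc : IAcount G (traceMk G (K ++ [i])) i = 1 := IAcount_eq_one hheadIA hhead1
    have hheadzero : ∀ v, v ≠ i → IAcount G (traceMk G (K ++ [i])) v = 0 :=
      fun v hv => factor_IA hkept hiK hv
    rcases Nat.eq_zero_or_pos n with rfl | hn
    · -- base case : Rest and D are empty
      have hRestnil : Rest = [] := by
        rcases List.eq_nil_or_concat Rest with h' | ⟨R', b, hRc⟩
        · exact h'
        · exfalso
          rw [List.concat_eq_append] at hRc; subst hRc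
          have hb : b ∈ IAset G (traceMk G (B₁ ++ i :: (R' ++ [b]))) := by
            apply IA_of_concat (p := 1) (A := B₁ ++ i :: R')
            rw [one_mul]
            congr 1
            simp
          have : b = i := hIA hb
          subst this
          have : 1 ≤ (R' ++ [b]).count b := List.count_pos_iff.mpr
            (List.mem_append_right _ (List.mem_singleton_self b))
          omega
      subst hRestnil
      have hDnil : D = [] := by
        rcases List.eq_nil_or_concat D with h' | ⟨D', d, hDc⟩
        · exact h'
        · exfalso
          rw [List.concat_eq_append] at hDc
          have hd : d ∈ IAset G (traceMk G (B₁ ++ i :: ([] : List V))) := by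
            rw [hspec, hDc]
            apply IA_of_concat (p := 1) (A := (K ++ [i]) ++ D')
            rw [one_mul]
            congr 1
            simp
          have : d = i := hIA hd
          subst this
          exact hiD (hDc ▸ List.mem_append_right _ (List.mem_singleton_self d))
      refine ⟨[K ++ [i]], by simp, ?_, ?_⟩
      · rw [hspec, hDnil]
        simp
      · intro F hF
        have : F = K ++ [i] := by simpa using hF
        subst this
        exact ⟨hheadIAc, hheadzero, hhead1⟩
    · -- inductive case
      have hIA' : IAset G (traceMk G (D ++ Rest)) ⊆ {i} := by
        intro v hv
        obtain ⟨u, hu⟩ := hv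
        apply hIA
        refine ⟨traceMk G (K ++ [i]) * u, ?_⟩
        rw [hspec, traceMk_append, hu, mul_assoc]
      have hcDR : (D ++ Rest).count i = n := by simp [List.count_append, hcD, hcRest]
      obtain ⟨Fs', hlen, hprod, hconds⟩ := ih (D ++ Rest) hcDR hn hIA'
      refine ⟨(K ++ [i]) :: Fs', by simp [hlen], ?_, ?_⟩
      · rw [hspec, traceMk_append, List.map_cons, List.prod_cons, hprod]
      · intro F hF
        rcases List.mem_cons.mp hF with rfl | hF'
        · exact ⟨hheadIAc, hheadzero, hhead1⟩
        · exact hconds F hF'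

end Exist

lemma ofFn_cast_map {α β : Type*} (l : List α) (f : α → β) {n : ℕ} (h : l.length = n) :
    List.ofFn (fun j : Fin n => f (l.get (Fin.cast h.symm j))) = l.map f := by
  subst h
  rw [show (fun j : Fin l.length => f (l.get (Fin.cast rfl j))) = f ∘ l.get from rfl,
    ← List.map_ofFn, List.ofFn_get]

/-- existence and uniqueness of the `i`-form: if `w ∈ M(I,G)` has initial
alphabet (as a set) equal to `{i}` and `i` occurs `m` times in `w`, then there are unique
traces `w₁, …, w_m` with `w = w₁⋯w_m`, each `w_j` having initial alphabet multiset `{i}`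
(i.e. `IA`-multiplicity `1` at `i` and `0` elsewhere) and containing the letter `i` exactly
once.  The factors are represented by lists `Ls j`; uniqueness is up to trace equality. -/
theorem stmt7 {V : Type*} [DecidableEq V] (G : SimpleGraph V) (L : List V) (i : V)
    (hIA : IAset G (traceMk G L) = {i}) :
    ∃ Ls : Fin (L.count i) → List V,
      (traceMk G L = (List.ofFn fun j => traceMk G (Ls j)).prod) ∧
      (∀ j, IAcount G (traceMk G (Ls j)) i = 1 ∧
        (∀ v : V, v ≠ i → IAcount G (traceMk G (Ls j)) v = 0) ∧
        (Ls j).count i = 1) ∧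
      (∀ Ls' : Fin (L.count i) → List V,
        (traceMk G L = (List.ofFn fun j => traceMk G (Ls' j)).prod) →
        (∀ j, IAcount G (traceMk G (Ls' j)) i = 1 ∧
          (∀ v : V, v ≠ i → IAcount G (traceMk G (Ls' j)) v = 0) ∧
          (Ls' j).count i = 1) →
        ∀ j, traceMk G (Ls' j) = traceMk G (Ls j)) := by
  have hiIA : i ∈ IAset G (traceMk G L) := by rw [hIA]; exact rfl
  have hm : 1 ≤ L.count i := by
    obtain ⟨u, hu⟩ := hiIA
    obtain ⟨U, rfl⟩ := exists_rep u
    rw [← traceMk_append] at hu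
    have := count_eq_of_traceMk_eq hu i
    simp [List.count_append] at this
    omega
  obtain ⟨Fs, hlen, hprod, hconds⟩ := existence (L.count i) L rfl hm (by rw [hIA])
  have hofn : (List.ofFn fun j : Fin (L.count i) =>
      traceMk G (Fs.get (Fin.cast hlen.symm j))) = Fs.map (traceMk G) :=
    ofFn_cast_map Fs (traceMk G) hlen
  refine ⟨fun j => Fs.get (Fin.cast hlen.symm j), ?_, ?_, ?_⟩
  · rw [hofn]; exact hprod
  · intro j
    exact hconds _ (List.get_mem Fs (Fin.cast hlen.symm j))
  · intro Ls' hprod' hconds' j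
    refine uniq (i := i) (L.count i) Ls' (fun j => Fs.get (Fin.cast hlen.symm j)) ?_ ?_ ?_ j
    · rw [hofn]
      exact hprod'.symm.trans hprod
    · exact fun k => ⟨(hconds' k).2.1, (hconds' k).2.2⟩
    · intro k
      have h := hconds _ (List.get_mem Fs (Fin.cast hlen.symm k))
      exact ⟨h.2.1, h.2.2⟩
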